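/- arXiv:1502.07441 — 2 statements merged into one kernel-verified Lean document; each statement's English description precedes it below -/
import Mathlib

section
/- Every derived nilpotent Lie algebra in an additive symmetric monoidal category is solvable. More precisely, ℓ^(3) = ℓ⟨2⟩ ∘ ℓ^⊗2, and for n > 3 one has ℓ^(n+1) = ℓ⟨n⟩ ∘ ℓ^⊗n ∘ (ℓ^(n-1) ⊗ ℓ^(n-1) ⊗ ℓ^(n-2) ⊗ ℓ^(n-2) ⊗ ⋯ ⊗ ℓ ⊗ ℓ ⊗ id_L^⊗4); hence ℓ⟨n⟩ ∘ ℓ^⊗n = 0 implies ℓ^(n+1) = 0. -/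
open CategoryTheory MonoidalCategory

variable {C : Type*} [Category C] [MonoidalCategory C]

/-- `npow L n` is the `(n+1)`-fold tensor power `L^⊗(n+1)`. -/
def npow (L : C) : ℕ → C
  | 0 => L
  | n + 1 => L ⊗ npow L n

/-- Iterated bracket: `iterBracket ℓ n = ℓ⟨n+2⟩ : L^⊗(n+2) ⟶ L`. -/
def iterBracket {L : C} (ℓ : L ⊗ L ⟶ L) : (n : ℕ) → (npow L (n + 1) ⟶ L)
  | 0 => ℓ
  | n + 1 => (L ◁ iterBracket ℓ n) ≫ ℓ

/-- Domain of the derived morphism `ℓ^(n+2)`. -/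
def Dpow (L : C) : ℕ → C
  | 0 => L ⊗ L
  | n + 1 => Dpow L n ⊗ Dpow L n

/-- Derived morphisms: `derived ℓ n = ℓ^(n+2)`. -/
def derived {L : C} (ℓ : L ⊗ L ⟶ L) : (n : ℕ) → (Dpow L n ⟶ L)
  | 0 => ℓ
  | n + 1 => (derived ℓ n ⊗ₘ derived ℓ n) ≫ ℓ

/-- `tpow ℓ n = ℓ^{⊗(n+1)} : (L⊗L)^{⊗(n+1)} ⟶ L^{⊗(n+1)}`. -/
def tpow {L : C} (ℓ : L ⊗ L ⟶ L) : (n : ℕ) → (npow (L ⊗ L) n ⟶ npow L n)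
  | 0 => ℓ
  | n + 1 => ℓ ⊗ₘ tpow ℓ n

lemma derived_factor {L : C} (ℓ : L ⊗ L ⟶ L) :
    ∀ k, ∃ g : Dpow L (k + 1) ⟶ npow (L ⊗ L) (k + 1),
      derived ℓ (k + 1) = g ≫ tpow ℓ (k + 1) ≫ iterBracket ℓ k := by
  intro k
  induction k with
  | zero =>
    exact ⟨𝟙 _, by simp [derived, tpow, iterBracket]; exact (Category.id_comp _).symm⟩
  | succ k ih =>
    obtain ⟨g, hg⟩ := ih
    refine ⟨(derived ℓ k ⊗ₘ derived ℓ k) ⊗ₘ g, ?_⟩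
    have h1 : tpow ℓ (k + 2) ≫ iterBracket ℓ (k + 1)
        = (ℓ ⊗ₘ tpow ℓ (k + 1)) ≫ (L ◁ iterBracket ℓ k) ≫ ℓ := rfl
    rw [h1]
    have h2 : (ℓ ⊗ₘ tpow ℓ (k + 1)) ≫ (L ◁ iterBracket ℓ k)
        = ℓ ⊗ₘ (tpow ℓ (k + 1) ≫ iterBracket ℓ k) := by
      rw [← MonoidalCategory.id_tensorHom, MonoidalCategory.tensorHom_comp_tensorHom,
        Category.comp_id]
    rw [reassoc_of% h2]; erw [MonoidalCategory.tensorHom_comp_tensorHom_assoc]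
    have h3 : derived ℓ (k + 2) = (derived ℓ (k + 1) ⊗ₘ derived ℓ (k + 1)) ≫ ℓ := rfl
    have h4 : derived ℓ (k + 1) = (derived ℓ k ⊗ₘ derived ℓ k) ≫ ℓ := rfl
    erw [← h4, ← hg]
    exact h3

/-- Every derived nilpotent Lie algebra in an additive symmetric monoidal
category is solvable.  More precisely `ℓ^(3) = ℓ⟨2⟩ ∘ ℓ^{⊗2}`, and
`ℓ⟨n⟩ ∘ ℓ^{⊗n} = 0` for sufficiently large `n` implies `ℓ^(m) = 0` for sufficiently
large `m`. -/
theorem derived_nilpotent_implies_solvable {C : Type*} [Category C] [MonoidalCategory C]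
    [Preadditive C] [SymmetricCategory C] [MonoidalPreadditive C]
    (L : C) (ℓ : L ⊗ L ⟶ L)
    (hanti : (𝟙 (L ⊗ L) + (β_ L L).hom) ≫ ℓ = 0)
    (hjac : (𝟙 (L ⊗ (L ⊗ L)) + ((α_ L L L).inv ≫ (β_ (L ⊗ L) L).hom)
        + ((α_ L L L).inv ≫ (β_ (L ⊗ L) L).hom) ≫ ((α_ L L L).inv ≫ (β_ (L ⊗ L) L).hom))
        ≫ ((L ◁ ℓ) ≫ ℓ) = 0) :
    derived ℓ 1 = tpow ℓ 1 ≫ iterBracket ℓ 0 ∧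
    ((∃ N, ∀ n ≥ N, tpow ℓ (n + 1) ≫ iterBracket ℓ n = 0) →
      ∃ M, ∀ m ≥ M, derived ℓ m = 0) := by
  constructor
  · simp [derived, tpow, iterBracket]; rfl
  · rintro ⟨N, hN⟩
    refine ⟨N + 1, fun m hm => ?_⟩
    obtain ⟨k, rfl⟩ : ∃ k, m = k + 1 := ⟨m - 1, by omega⟩
    obtain ⟨g, hg⟩ := derived_factor ℓ k
    rw [hg, hN k (by omega), Limits.comp_zero]
end

section
/- Partial traces in a ribbon category are cyclic up to braidings and twists: for f : U ⊗ X → Y and g : V ⊗ Y → X, one has tr₃(f ∘ (id_U ⊗ g)) = tr₃(g ∘ (id_V ⊗ f) ∘ ((c_{U,V} ∘ (θ_U ⊗ id_V)) ⊗ id_X)), where tr₃ denotes the partial trace over the last tensor factor. -/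
open CategoryTheory MonoidalCategory BraidedCategory

variable {C : Type*} [Category C] [MonoidalCategory C] [BraidedCategory C] [RigidCategory C]

/-- The sovereign structure `σ_U : U^∨ ⟶ ^∨U` induced by a twist `θ`. -/
def sovereignOfTwist (θ : ∀ X : C, X ⟶ X) (U : C) : Uᘁ ⟶ ᘁU :=
  (ρ_ (Uᘁ)).inv ≫ ((Uᘁ) ◁ η_ (ᘁU) U) ≫ (α_ (Uᘁ) (ᘁU) U).inv
    ≫ ((β_ (ᘁU) (Uᘁ)).inv ▷ U) ≫ (α_ (ᘁU) (Uᘁ) U).hom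
    ≫ ((ᘁU) ◁ ((Uᘁ) ◁ θ U)) ≫ ((ᘁU) ◁ ε_ U (Uᘁ)) ≫ (ρ_ (ᘁU)).hom

/-- Partial trace over the last tensor factor of `f : X ⊗ V ⟶ V`. -/
def partialTrace (θ : ∀ X : C, X ⟶ X) {X V : C} (f : X ⊗ V ⟶ V) : X ⟶ 𝟙_ C :=
  (ρ_ X).inv ≫ (X ◁ η_ V (Vᘁ)) ≫ (α_ X V (Vᘁ)).inv ≫ (f ▷ (Vᘁ))
    ≫ (V ◁ sovereignOfTwist θ V) ≫ ε_ (ᘁV) V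

set_option maxHeartbeats 1000000

namespace PartialTraceCyclic

lemma capK (V : C) :
    V ◁ (β_ (ᘁV) (Vᘁ)).inv ≫ (α_ V (ᘁV) (Vᘁ)).inv ≫ ε_ (ᘁV) V ▷ (Vᘁ) ≫ (λ_ (Vᘁ)).hom =
    (α_ V (Vᘁ) (ᘁV)).inv ≫ (β_ V (Vᘁ)).hom ▷ (ᘁV) ≫ (α_ (Vᘁ) V (ᘁV)).hom ≫
      (Vᘁ) ◁ ε_ (ᘁV) V ≫ (ρ_ (Vᘁ)).hom := by
  have h : ε_ (ᘁV) V ▷ (Vᘁ) ≫ (λ_ (Vᘁ)).hom =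
      (β_ (V ⊗ (ᘁV)) (Vᘁ)).hom ≫ (Vᘁ) ◁ ε_ (ᘁV) V ≫ (ρ_ (Vᘁ)).hom := by
    have h0 := braiding_naturality_left (ε_ (ᘁV) V) (Vᘁ)
    rw [braiding_tensorUnit_left] at h0
    rw [← cancel_mono (ρ_ (Vᘁ)).inv]
    simpa using h0
  rw [h, braiding_tensor_left_hom]
  simp

lemma sov_eval (θ : ∀ X : C, X ⟶ X) (V : C) :
    (V ◁ sovereignOfTwist θ V) ≫ ε_ (ᘁV) V =
      (θ V ▷ (Vᘁ)) ≫ (β_ V (Vᘁ)).hom ≫ ε_ V (Vᘁ) := by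
  calc (V ◁ sovereignOfTwist θ V) ≫ ε_ (ᘁV) V
      = 𝟙 (V ⊗ (Vᘁ)) ⊗≫ V ◁ ((Vᘁ) ◁ η_ (ᘁV) V) ⊗≫ V ◁ ((β_ (ᘁV) (Vᘁ)).inv ▷ V)
          ⊗≫ ((V ⊗ (ᘁV)) ◁ (((Vᘁ) ◁ θ V) ≫ ε_ V (Vᘁ)) ≫ ε_ (ᘁV) V ▷ (𝟙_ C)) ⊗≫ 𝟙 (𝟙_ C) := by
        simp [sovereignOfTwist]; monoidal
    _ = 𝟙 (V ⊗ (Vᘁ)) ⊗≫ V ◁ ((Vᘁ) ◁ η_ (ᘁV) V) ⊗≫ V ◁ ((β_ (ᘁV) (Vᘁ)).inv ▷ V)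
          ⊗≫ (ε_ (ᘁV) V ▷ ((Vᘁ) ⊗ V) ≫ (𝟙_ C) ◁ (((Vᘁ) ◁ θ V) ≫ ε_ V (Vᘁ))) ⊗≫ 𝟙 (𝟙_ C) := by
        rw [whisker_exchange]
    _ = 𝟙 (V ⊗ (Vᘁ)) ⊗≫ V ◁ ((Vᘁ) ◁ η_ (ᘁV) V)
          ⊗≫ ((V ◁ (β_ (ᘁV) (Vᘁ)).inv ≫ (α_ V (ᘁV) (Vᘁ)).inv ≫ ε_ (ᘁV) V ▷ (Vᘁ) ≫ (λ_ (Vᘁ)).hom) ▷ V)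
          ⊗≫ ((Vᘁ) ◁ θ V) ⊗≫ ε_ V (Vᘁ) := by
        monoidal
    _ = 𝟙 (V ⊗ (Vᘁ)) ⊗≫ V ◁ ((Vᘁ) ◁ η_ (ᘁV) V)
          ⊗≫ (((α_ V (Vᘁ) (ᘁV)).inv ≫ (β_ V (Vᘁ)).hom ▷ (ᘁV) ≫ (α_ (Vᘁ) V (ᘁV)).hom ≫
               (Vᘁ) ◁ ε_ (ᘁV) V ≫ (ρ_ (Vᘁ)).hom) ▷ V)
          ⊗≫ ((Vᘁ) ◁ θ V) ⊗≫ ε_ V (Vᘁ) := by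
        rw [capK]
    _ = 𝟙 (V ⊗ (Vᘁ)) ⊗≫ ((V ⊗ (Vᘁ)) ◁ η_ (ᘁV) V ≫ (β_ V (Vᘁ)).hom ▷ ((ᘁV) ⊗ V))
          ⊗≫ ((Vᘁ) ◁ (ε_ (ᘁV) V ▷ V)) ⊗≫ ((Vᘁ) ◁ θ V) ⊗≫ ε_ V (Vᘁ) := by
        monoidal
    _ = 𝟙 (V ⊗ (Vᘁ)) ⊗≫ ((β_ V (Vᘁ)).hom ▷ (𝟙_ C) ≫ ((Vᘁ) ⊗ V) ◁ η_ (ᘁV) V)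
          ⊗≫ ((Vᘁ) ◁ (ε_ (ᘁV) V ▷ V)) ⊗≫ ((Vᘁ) ◁ θ V) ⊗≫ ε_ V (Vᘁ) := by
        rw [whisker_exchange]
    _ = 𝟙 (V ⊗ (Vᘁ)) ⊗≫ (β_ V (Vᘁ)).hom
          ⊗≫ ((Vᘁ) ◁ (V ◁ η_ (ᘁV) V ≫ (α_ V (ᘁV) V).inv ≫ ε_ (ᘁV) V ▷ V))
          ⊗≫ ((Vᘁ) ◁ θ V) ⊗≫ ε_ V (Vᘁ) := by
        monoidal
    _ = 𝟙 (V ⊗ (Vᘁ)) ⊗≫ (β_ V (Vᘁ)).hom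
          ⊗≫ ((Vᘁ) ◁ ((ρ_ V).hom ≫ (λ_ V).inv))
          ⊗≫ ((Vᘁ) ◁ θ V) ⊗≫ ε_ V (Vᘁ) := by
        rw [ExactPairing.coevaluation_evaluation]
    _ = (β_ V (Vᘁ)).hom ≫ (Vᘁ) ◁ θ V ≫ ε_ V (Vᘁ) := by
        monoidal
    _ = (θ V ▷ (Vᘁ)) ≫ (β_ V (Vᘁ)).hom ≫ ε_ V (Vᘁ) := by
        rw [braiding_naturality_left_assoc]

lemma ptr_eq (θ : ∀ X : C, X ⟶ X) {Z W : C} (h : Z ⊗ W ⟶ W) :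
    partialTrace θ h = (ρ_ Z).inv ≫ (Z ◁ η_ W (Wᘁ)) ≫ (α_ Z W (Wᘁ)).inv ≫ (h ▷ (Wᘁ))
      ≫ (θ W ▷ (Wᘁ)) ≫ (β_ W (Wᘁ)).hom ≫ ε_ W (Wᘁ) := by
  simp only [partialTrace, Category.assoc]
  rw [sov_eval]

variable {U V X Y : C}

/-- Partial right mate of `f` with a spectator strand. -/
def mateF (f : U ⊗ X ⟶ Y) : (Yᘁ) ⊗ U ⟶ (Xᘁ) :=
  𝟙 ((Yᘁ) ⊗ U) ⊗≫ (((Yᘁ) ⊗ U) ◁ η_ X (Xᘁ)) ⊗≫ ((Yᘁ) ◁ (f ▷ (Xᘁ)))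
    ⊗≫ (ε_ Y (Yᘁ) ▷ (Xᘁ)) ⊗≫ 𝟙 (Xᘁ)

lemma rotA (f : U ⊗ X ⟶ Y) :
    (𝟙 U ⊗≫ (U ◁ η_ X (Xᘁ)) ⊗≫ (f ▷ (Xᘁ)) : U ⟶ Y ⊗ (Xᘁ)) =
      𝟙 U ⊗≫ (η_ Y (Yᘁ) ▷ U) ⊗≫ (Y ◁ mateF f) ⊗≫ 𝟙 (Y ⊗ (Xᘁ)) := by
  symm
  calc (𝟙 U ⊗≫ (η_ Y (Yᘁ) ▷ U) ⊗≫ (Y ◁ mateF f) ⊗≫ 𝟙 (Y ⊗ (Xᘁ)) : U ⟶ Y ⊗ (Xᘁ))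
      = 𝟙 U ⊗≫ (η_ Y (Yᘁ) ▷ U ≫
          (Y ⊗ (Yᘁ)) ◁ (𝟙 U ⊗≫ (U ◁ η_ X (Xᘁ)) ⊗≫ (f ▷ (Xᘁ)) : U ⟶ Y ⊗ (Xᘁ)))
          ⊗≫ (Y ◁ (ε_ Y (Yᘁ) ▷ (Xᘁ))) ⊗≫ 𝟙 (Y ⊗ (Xᘁ)) := by
        simp only [mateF]; monoidal
    _ = 𝟙 U ⊗≫ ((𝟙_ C) ◁ (𝟙 U ⊗≫ (U ◁ η_ X (Xᘁ)) ⊗≫ (f ▷ (Xᘁ)) : U ⟶ Y ⊗ (Xᘁ)) ≫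
          η_ Y (Yᘁ) ▷ (Y ⊗ (Xᘁ)))
          ⊗≫ (Y ◁ (ε_ Y (Yᘁ) ▷ (Xᘁ))) ⊗≫ 𝟙 (Y ⊗ (Xᘁ)) := by
        rw [whisker_exchange]
    _ = (𝟙 U ⊗≫ (U ◁ η_ X (Xᘁ)) ⊗≫ (f ▷ (Xᘁ)) : U ⟶ Y ⊗ (Xᘁ)) ⊗≫
          ((η_ Y (Yᘁ) ▷ Y ≫ (α_ Y (Yᘁ) Y).hom ≫ Y ◁ ε_ Y (Yᘁ)) ▷ (Xᘁ)) ⊗≫ 𝟙 (Y ⊗ (Xᘁ)) := by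
        monoidal
    _ = (𝟙 U ⊗≫ (U ◁ η_ X (Xᘁ)) ⊗≫ (f ▷ (Xᘁ)) : U ⟶ Y ⊗ (Xᘁ)) ⊗≫
          (((λ_ Y).hom ≫ (ρ_ Y).inv) ▷ (Xᘁ)) ⊗≫ 𝟙 (Y ⊗ (Xᘁ)) := by
        rw [ExactPairing.evaluation_coevaluation]
    _ = _ := by monoidal

lemma rotC (f : U ⊗ X ⟶ Y) :
    (mateF f ▷ X) ≫ ε_ X (Xᘁ) =
      (α_ (Yᘁ) U X).hom ≫ ((Yᘁ) ◁ f) ≫ ε_ Y (Yᘁ) := by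
  calc (mateF f ▷ X) ≫ ε_ X (Xᘁ)
      = 𝟙 (((Yᘁ) ⊗ U) ⊗ X) ⊗≫ ((((Yᘁ) ⊗ U) ◁ η_ X (Xᘁ)) ▷ X)
          ⊗≫ (((Yᘁ) ◁ (f ▷ (Xᘁ))) ▷ X)
          ⊗≫ (ε_ Y (Yᘁ) ▷ ((Xᘁ) ⊗ X) ≫ (𝟙_ C) ◁ ε_ X (Xᘁ)) ⊗≫ 𝟙 (𝟙_ C) := by
        simp only [mateF]; monoidal
    _ = 𝟙 (((Yᘁ) ⊗ U) ⊗ X) ⊗≫ ((((Yᘁ) ⊗ U) ◁ η_ X (Xᘁ)) ▷ X)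
          ⊗≫ (((Yᘁ) ◁ (f ▷ (Xᘁ))) ▷ X)
          ⊗≫ (((Yᘁ) ⊗ Y) ◁ ε_ X (Xᘁ) ≫ ε_ Y (Yᘁ) ▷ (𝟙_ C)) ⊗≫ 𝟙 (𝟙_ C) := by
        rw [← whisker_exchange]
    _ = 𝟙 (((Yᘁ) ⊗ U) ⊗ X) ⊗≫ ((((Yᘁ) ⊗ U) ◁ η_ X (Xᘁ)) ▷ X)
          ⊗≫ (((Yᘁ) ◁ f) ▷ ((Xᘁ) ⊗ X) ≫ ((Yᘁ) ⊗ Y) ◁ ε_ X (Xᘁ))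
          ⊗≫ ε_ Y (Yᘁ) := by
        monoidal
    _ = 𝟙 (((Yᘁ) ⊗ U) ⊗ X) ⊗≫ ((((Yᘁ) ⊗ U) ◁ η_ X (Xᘁ)) ▷ X)
          ⊗≫ (((Yᘁ) ⊗ (U ⊗ X)) ◁ ε_ X (Xᘁ) ≫ ((Yᘁ) ◁ f) ▷ (𝟙_ C))
          ⊗≫ ε_ Y (Yᘁ) := by
        rw [whisker_exchange]
    _ = 𝟙 (((Yᘁ) ⊗ U) ⊗ X) ⊗≫ (((Yᘁ) ⊗ U) ◁ (η_ X (Xᘁ) ▷ X ≫ (α_ X (Xᘁ) X).hom ≫ X ◁ ε_ X (Xᘁ)))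
          ⊗≫ ((Yᘁ) ◁ f) ⊗≫ ε_ Y (Yᘁ) := by
        monoidal
    _ = 𝟙 (((Yᘁ) ⊗ U) ⊗ X) ⊗≫ (((Yᘁ) ⊗ U) ◁ ((λ_ X).hom ≫ (ρ_ X).inv))
          ⊗≫ ((Yᘁ) ◁ f) ⊗≫ ε_ Y (Yᘁ) := by
        rw [ExactPairing.evaluation_coevaluation]
    _ = _ := by monoidal

lemma auxHex (A B D : C) :
    (β_ A B).hom ▷ D = (α_ A B D).hom ≫ (β_ A (B ⊗ D)).hom ≫ (α_ B D A).hom ≫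
      (B ◁ (β_ A D).inv) ≫ (α_ B A D).inv := by
  rw [braiding_tensor_right_hom]
  simp

lemma thStep (θ : ∀ X : C, X ⟶ X)
    (hθiso : ∀ X, IsIso (θ X))
    (hθnat : ∀ {X Y : C} (g : X ⟶ Y), g ≫ θ Y = θ X ≫ g)
    (hθtensor : ∀ X Y : C, θ (X ⊗ Y) = (β_ X Y).hom ≫ (β_ Y X).hom ≫ (θ X ⊗ₘ θ Y))
    (f : U ⊗ X ⟶ Y) :
    (U ◁ θ X) ≫ f = (inv (θ U) ▷ X) ≫ (β_ X U).inv ≫ (β_ U X).inv ≫ f ≫ θ Y := by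
  haveI := hθiso U
  have h1 : (θ U ⊗ₘ θ X) = (β_ X U).inv ≫ (β_ U X).inv ≫ θ (U ⊗ X) := by
    rw [hθtensor]
    simp
  calc (U ◁ θ X) ≫ f = (inv (θ U) ▷ X) ≫ (θ U ▷ X) ≫ (U ◁ θ X) ≫ f := by
        rw [← comp_whiskerRight_assoc, IsIso.inv_hom_id, id_whiskerRight, Category.id_comp]
    _ = (inv (θ U) ▷ X) ≫ (θ U ⊗ₘ θ X) ≫ f := by
        rw [tensorHom_def_assoc]
    _ = (inv (θ U) ▷ X) ≫ (β_ X U).inv ≫ (β_ U X).inv ≫ θ (U ⊗ X) ≫ f := by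
        rw [h1]
        simp only [Category.assoc]
    _ = _ := by rw [← hθnat f]

/-- The rotated form of `g` used as the common middle form. -/
def psiAux (g : V ⊗ Y ⟶ X) : V ⟶ (Yᘁ) ⊗ X :=
  𝟙 V ⊗≫ (V ◁ η_ Y (Yᘁ)) ⊗≫ (β_ (V ⊗ Y) (Yᘁ)).hom ⊗≫ ((Yᘁ) ◁ g) ⊗≫ 𝟙 ((Yᘁ) ⊗ X)

lemma mainL (θ : ∀ X : C, X ⟶ X) (f : U ⊗ X ⟶ Y) (g : V ⊗ Y ⟶ X) :
    partialTrace θ ((α_ U V Y).hom ≫ (U ◁ g) ≫ f) =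
      𝟙 (U ⊗ V) ⊗≫ (U ◁ psiAux g) ⊗≫ ((β_ U (Yᘁ)).hom ▷ X)
        ⊗≫ ((Yᘁ) ◁ (f ≫ θ Y)) ⊗≫ ε_ Y (Yᘁ) := by
  rw [ptr_eq]
  calc (ρ_ (U ⊗ V)).inv ≫ ((U ⊗ V) ◁ η_ Y (Yᘁ)) ≫ (α_ (U ⊗ V) Y (Yᘁ)).inv
        ≫ (((α_ U V Y).hom ≫ (U ◁ g) ≫ f) ▷ (Yᘁ))
        ≫ (θ Y ▷ (Yᘁ)) ≫ (β_ Y (Yᘁ)).hom ≫ ε_ Y (Yᘁ)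
      = 𝟙 (U ⊗ V) ⊗≫ (U ◁ (V ◁ η_ Y (Yᘁ))) ⊗≫ ((U ◁ g) ▷ (Yᘁ))
          ⊗≫ ((f ≫ θ Y) ▷ (Yᘁ) ≫ (β_ Y (Yᘁ)).hom) ⊗≫ ε_ Y (Yᘁ) := by
        monoidal
    _ = 𝟙 (U ⊗ V) ⊗≫ (U ◁ (V ◁ η_ Y (Yᘁ))) ⊗≫ ((U ◁ g) ▷ (Yᘁ))
          ⊗≫ ((β_ (U ⊗ X) (Yᘁ)).hom ≫ (Yᘁ) ◁ (f ≫ θ Y)) ⊗≫ ε_ Y (Yᘁ) := by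
        rw [braiding_naturality_left]
    _ = 𝟙 (U ⊗ V) ⊗≫ (U ◁ (V ◁ η_ Y (Yᘁ))) ⊗≫ (U ◁ (g ▷ (Yᘁ) ≫ (β_ X (Yᘁ)).hom))
          ⊗≫ ((β_ U (Yᘁ)).hom ▷ X) ⊗≫ ((Yᘁ) ◁ (f ≫ θ Y)) ⊗≫ ε_ Y (Yᘁ) := by
        rw [braiding_tensor_left_hom]
        monoidal
    _ = 𝟙 (U ⊗ V) ⊗≫ (U ◁ (V ◁ η_ Y (Yᘁ))) ⊗≫ (U ◁ ((β_ (V ⊗ Y) (Yᘁ)).hom ≫ (Yᘁ) ◁ g))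
          ⊗≫ ((β_ U (Yᘁ)).hom ▷ X) ⊗≫ ((Yᘁ) ◁ (f ≫ θ Y)) ⊗≫ ε_ Y (Yᘁ) := by
        rw [braiding_naturality_left]
    _ = _ := by
        simp only [psiAux]
        monoidal

lemma bridge (θ : ∀ X : C, X ⟶ X) (f : U ⊗ X ⟶ Y) (g : V ⊗ Y ⟶ X) :
    (𝟙 (U ⊗ V) ⊗≫ (U ◁ psiAux g) ⊗≫ ((β_ U (Yᘁ)).hom ▷ X)
        ⊗≫ ((Yᘁ) ◁ (f ≫ θ Y)) ⊗≫ ε_ Y (Yᘁ) : U ⊗ V ⟶ 𝟙_ C) =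
      𝟙 (U ⊗ V) ⊗≫ (β_ U V).hom ⊗≫ (psiAux g ▷ U) ⊗≫ ((Yᘁ) ◁ (β_ U X).inv)
        ⊗≫ ((Yᘁ) ◁ (f ≫ θ Y)) ⊗≫ ε_ Y (Yᘁ) := by
  calc (𝟙 (U ⊗ V) ⊗≫ (U ◁ psiAux g) ⊗≫ ((β_ U (Yᘁ)).hom ▷ X)
        ⊗≫ ((Yᘁ) ◁ (f ≫ θ Y)) ⊗≫ ε_ Y (Yᘁ) : U ⊗ V ⟶ 𝟙_ C)
      = 𝟙 (U ⊗ V) ⊗≫ (U ◁ psiAux g ≫ (β_ U ((Yᘁ) ⊗ X)).hom) ⊗≫ ((Yᘁ) ◁ (β_ U X).inv)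
          ⊗≫ ((Yᘁ) ◁ (f ≫ θ Y)) ⊗≫ ε_ Y (Yᘁ) := by
        rw [auxHex]
        monoidal
    _ = 𝟙 (U ⊗ V) ⊗≫ ((β_ U V).hom ≫ psiAux g ▷ U) ⊗≫ ((Yᘁ) ◁ (β_ U X).inv)
          ⊗≫ ((Yᘁ) ◁ (f ≫ θ Y)) ⊗≫ ε_ Y (Yᘁ) := by
        rw [braiding_naturality_right]
    _ = _ := by monoidal

lemma mainR (θ : ∀ X : C, X ⟶ X)
    (hθiso : ∀ X, IsIso (θ X))
    (hθnat : ∀ {X Y : C} (g : X ⟶ Y), g ≫ θ Y = θ X ≫ g)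
    (hθtensor : ∀ X Y : C, θ (X ⊗ Y) = (β_ X Y).hom ≫ (β_ Y X).hom ≫ (θ X ⊗ₘ θ Y))
    (f : U ⊗ X ⟶ Y) (g : V ⊗ Y ⟶ X) :
    partialTrace θ ((((θ U ▷ V) ≫ (β_ U V).hom) ▷ X) ≫ (α_ V U X).hom ≫ (V ◁ f) ≫ g) =
      𝟙 (U ⊗ V) ⊗≫ (β_ U V).hom ⊗≫ (psiAux g ▷ U) ⊗≫ ((Yᘁ) ◁ (β_ U X).inv)
        ⊗≫ ((Yᘁ) ◁ (f ≫ θ Y)) ⊗≫ ε_ Y (Yᘁ) := by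
  haveI := hθiso U
  rw [ptr_eq]
  calc (ρ_ (U ⊗ V)).inv ≫ ((U ⊗ V) ◁ η_ X (Xᘁ)) ≫ (α_ (U ⊗ V) X (Xᘁ)).inv
        ≫ (((((θ U ▷ V) ≫ (β_ U V).hom) ▷ X) ≫ (α_ V U X).hom ≫ (V ◁ f) ≫ g) ▷ (Xᘁ))
        ≫ (θ X ▷ (Xᘁ)) ≫ (β_ X (Xᘁ)).hom ≫ ε_ X (Xᘁ)
      = 𝟙 (U ⊗ V) ⊗≫ ((U ⊗ V) ◁ η_ X (Xᘁ) ≫ ((θ U ▷ V ≫ (β_ U V).hom) ▷ (X ⊗ (Xᘁ))))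
          ⊗≫ ((V ◁ f) ▷ (Xᘁ)) ⊗≫ ((g ≫ θ X) ▷ (Xᘁ) ≫ (β_ X (Xᘁ)).hom) ⊗≫ ε_ X (Xᘁ) := by
        monoidal
    _ = 𝟙 (U ⊗ V) ⊗≫ ((θ U ▷ V ≫ (β_ U V).hom) ▷ (𝟙_ C) ≫ (V ⊗ U) ◁ η_ X (Xᘁ))
          ⊗≫ ((V ◁ f) ▷ (Xᘁ)) ⊗≫ ((g ≫ θ X) ▷ (Xᘁ) ≫ (β_ X (Xᘁ)).hom) ⊗≫ ε_ X (Xᘁ) := by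
        rw [← whisker_exchange]
    _ = 𝟙 (U ⊗ V) ⊗≫ ((θ U ▷ V ≫ (β_ U V).hom) ▷ (𝟙_ C) ≫ (V ⊗ U) ◁ η_ X (Xᘁ))
          ⊗≫ ((V ◁ f) ▷ (Xᘁ)) ⊗≫ ((β_ (V ⊗ Y) (Xᘁ)).hom ≫ (Xᘁ) ◁ (g ≫ θ X)) ⊗≫ ε_ X (Xᘁ) := by
        rw [braiding_naturality_left (g ≫ θ X) (Xᘁ)]
    _ = 𝟙 (U ⊗ V) ⊗≫ (θ U ▷ V) ⊗≫ (β_ U V).hom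
          ⊗≫ (V ◁ (𝟙 U ⊗≫ (U ◁ η_ X (Xᘁ)) ⊗≫ (f ▷ (Xᘁ)) : U ⟶ Y ⊗ (Xᘁ)))
          ⊗≫ ((β_ (V ⊗ Y) (Xᘁ)).hom ≫ (Xᘁ) ◁ (g ≫ θ X)) ⊗≫ ε_ X (Xᘁ) := by
        monoidal
    _ = 𝟙 (U ⊗ V) ⊗≫ (θ U ▷ V) ⊗≫ (β_ U V).hom
          ⊗≫ (V ◁ (𝟙 U ⊗≫ (η_ Y (Yᘁ) ▷ U) ⊗≫ (Y ◁ mateF f) ⊗≫ 𝟙 (Y ⊗ (Xᘁ))))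
          ⊗≫ ((β_ (V ⊗ Y) (Xᘁ)).hom ≫ (Xᘁ) ◁ (g ≫ θ X)) ⊗≫ ε_ X (Xᘁ) := by
        rw [rotA]
    _ = 𝟙 (U ⊗ V) ⊗≫ (θ U ▷ V) ⊗≫ (β_ U V).hom
          ⊗≫ (V ◁ (η_ Y (Yᘁ) ▷ U))
          ⊗≫ ((V ⊗ Y) ◁ mateF f ≫ (β_ (V ⊗ Y) (Xᘁ)).hom)
          ⊗≫ ((Xᘁ) ◁ (g ≫ θ X)) ⊗≫ ε_ X (Xᘁ) := by
        monoidal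
    _ = 𝟙 (U ⊗ V) ⊗≫ (θ U ▷ V) ⊗≫ (β_ U V).hom
          ⊗≫ (V ◁ (η_ Y (Yᘁ) ▷ U))
          ⊗≫ ((β_ (V ⊗ Y) ((Yᘁ) ⊗ U)).hom ≫ mateF f ▷ (V ⊗ Y))
          ⊗≫ ((Xᘁ) ◁ (g ≫ θ X)) ⊗≫ ε_ X (Xᘁ) := by
        rw [braiding_naturality_right (V ⊗ Y) (mateF f)]
    _ = 𝟙 (U ⊗ V) ⊗≫ (θ U ▷ V) ⊗≫ (β_ U V).hom
          ⊗≫ (V ◁ (η_ Y (Yᘁ) ▷ U))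
          ⊗≫ (β_ (V ⊗ Y) ((Yᘁ) ⊗ U)).hom
          ⊗≫ (mateF f ▷ (V ⊗ Y) ≫ (Xᘁ) ◁ (g ≫ θ X)) ⊗≫ ε_ X (Xᘁ) := by
        monoidal
    _ = 𝟙 (U ⊗ V) ⊗≫ (θ U ▷ V) ⊗≫ (β_ U V).hom
          ⊗≫ (V ◁ (η_ Y (Yᘁ) ▷ U))
          ⊗≫ (β_ (V ⊗ Y) ((Yᘁ) ⊗ U)).hom
          ⊗≫ (((Yᘁ) ⊗ U) ◁ (g ≫ θ X) ≫ mateF f ▷ X) ⊗≫ ε_ X (Xᘁ) := by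
        rw [← whisker_exchange (mateF f) (g ≫ θ X)]
    _ = 𝟙 (U ⊗ V) ⊗≫ (θ U ▷ V) ⊗≫ (β_ U V).hom
          ⊗≫ (V ◁ (η_ Y (Yᘁ) ▷ U))
          ⊗≫ (β_ (V ⊗ Y) ((Yᘁ) ⊗ U)).hom
          ⊗≫ (((Yᘁ) ⊗ U) ◁ (g ≫ θ X)) ⊗≫ (mateF f ▷ X ≫ ε_ X (Xᘁ)) := by
        monoidal
    _ = 𝟙 (U ⊗ V) ⊗≫ (θ U ▷ V) ⊗≫ (β_ U V).hom
          ⊗≫ (V ◁ (η_ Y (Yᘁ) ▷ U))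
          ⊗≫ (β_ (V ⊗ Y) ((Yᘁ) ⊗ U)).hom
          ⊗≫ (((Yᘁ) ⊗ U) ◁ (g ≫ θ X)) ⊗≫ ((α_ (Yᘁ) U X).hom ≫ ((Yᘁ) ◁ f) ≫ ε_ Y (Yᘁ)) := by
        rw [rotC]
    _ = 𝟙 (U ⊗ V) ⊗≫ (θ U ▷ V) ⊗≫ (β_ U V).hom
          ⊗≫ (V ◁ (η_ Y (Yᘁ) ▷ U))
          ⊗≫ (β_ (V ⊗ Y) ((Yᘁ) ⊗ U)).hom
          ⊗≫ (((Yᘁ) ⊗ U) ◁ g) ⊗≫ ((Yᘁ) ◁ ((U ◁ θ X) ≫ f)) ⊗≫ ε_ Y (Yᘁ) := by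
        monoidal
    _ = 𝟙 (U ⊗ V) ⊗≫ (θ U ▷ V) ⊗≫ (β_ U V).hom
          ⊗≫ (V ◁ (η_ Y (Yᘁ) ▷ U))
          ⊗≫ (β_ (V ⊗ Y) ((Yᘁ) ⊗ U)).hom
          ⊗≫ (((Yᘁ) ⊗ U) ◁ g)
          ⊗≫ ((Yᘁ) ◁ ((inv (θ U) ▷ X) ≫ (β_ X U).inv ≫ (β_ U X).inv ≫ f ≫ θ Y))
          ⊗≫ ε_ Y (Yᘁ) := by
        rw [thStep θ hθiso hθnat hθtensor]
    _ = 𝟙 (U ⊗ V) ⊗≫ (θ U ▷ V) ⊗≫ (β_ U V).hom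
          ⊗≫ (V ◁ (η_ Y (Yᘁ) ▷ U))
          ⊗≫ (β_ (V ⊗ Y) ((Yᘁ) ⊗ U)).hom
          ⊗≫ ((((Yᘁ) ⊗ U) ◁ g) ≫ (((Yᘁ) ◁ inv (θ U)) ▷ X))
          ⊗≫ ((Yᘁ) ◁ ((β_ X U).inv ≫ (β_ U X).inv ≫ f ≫ θ Y))
          ⊗≫ ε_ Y (Yᘁ) := by
        monoidal
    _ = 𝟙 (U ⊗ V) ⊗≫ (θ U ▷ V) ⊗≫ (β_ U V).hom
          ⊗≫ (V ◁ (η_ Y (Yᘁ) ▷ U))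
          ⊗≫ ((β_ (V ⊗ Y) ((Yᘁ) ⊗ U)).hom ≫ (((Yᘁ) ◁ inv (θ U)) ▷ (V ⊗ Y)))
          ⊗≫ (((Yᘁ) ⊗ U) ◁ g)
          ⊗≫ ((Yᘁ) ◁ ((β_ X U).inv ≫ (β_ U X).inv ≫ f ≫ θ Y))
          ⊗≫ ε_ Y (Yᘁ) := by
        rw [whisker_exchange ((Yᘁ) ◁ inv (θ U)) g]
        monoidal
    _ = 𝟙 (U ⊗ V) ⊗≫ (θ U ▷ V) ⊗≫ (β_ U V).hom
          ⊗≫ (V ◁ (η_ Y (Yᘁ) ▷ U ≫ (Y ⊗ (Yᘁ)) ◁ inv (θ U)))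
          ⊗≫ (β_ (V ⊗ Y) ((Yᘁ) ⊗ U)).hom
          ⊗≫ (((Yᘁ) ⊗ U) ◁ g)
          ⊗≫ ((Yᘁ) ◁ ((β_ X U).inv ≫ (β_ U X).inv ≫ f ≫ θ Y))
          ⊗≫ ε_ Y (Yᘁ) := by
        rw [← braiding_naturality_right (V ⊗ Y) ((Yᘁ) ◁ inv (θ U))]
        monoidal
    _ = 𝟙 (U ⊗ V) ⊗≫ (θ U ▷ V) ⊗≫ ((β_ U V).hom ≫ V ◁ inv (θ U))
          ⊗≫ (V ◁ (η_ Y (Yᘁ) ▷ U))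
          ⊗≫ (β_ (V ⊗ Y) ((Yᘁ) ⊗ U)).hom
          ⊗≫ (((Yᘁ) ⊗ U) ◁ g)
          ⊗≫ ((Yᘁ) ◁ ((β_ X U).inv ≫ (β_ U X).inv ≫ f ≫ θ Y))
          ⊗≫ ε_ Y (Yᘁ) := by
        rw [← whisker_exchange (η_ Y (Yᘁ)) (inv (θ U)), MonoidalCategory.id_whiskerLeft]
        monoidal
    _ = 𝟙 (U ⊗ V) ⊗≫ ((θ U ▷ V) ≫ (inv (θ U) ▷ V)) ⊗≫ (β_ U V).hom
          ⊗≫ (V ◁ (η_ Y (Yᘁ) ▷ U))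
          ⊗≫ (β_ (V ⊗ Y) ((Yᘁ) ⊗ U)).hom
          ⊗≫ (((Yᘁ) ⊗ U) ◁ g)
          ⊗≫ ((Yᘁ) ◁ ((β_ X U).inv ≫ (β_ U X).inv ≫ f ≫ θ Y))
          ⊗≫ ε_ Y (Yᘁ) := by
        rw [← braiding_naturality_left (inv (θ U)) V]
        monoidal
    _ = 𝟙 (U ⊗ V) ⊗≫ (β_ U V).hom
          ⊗≫ (V ◁ (η_ Y (Yᘁ) ▷ U))
          ⊗≫ (β_ (V ⊗ Y) ((Yᘁ) ⊗ U)).hom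
          ⊗≫ (((Yᘁ) ⊗ U) ◁ g)
          ⊗≫ ((Yᘁ) ◁ ((β_ X U).inv ≫ (β_ U X).inv ≫ f ≫ θ Y))
          ⊗≫ ε_ Y (Yᘁ) := by
        rw [← comp_whiskerRight, IsIso.hom_inv_id, id_whiskerRight]
        monoidal
    _ = 𝟙 (U ⊗ V) ⊗≫ (β_ U V).hom
          ⊗≫ (V ◁ (η_ Y (Yᘁ) ▷ U))
          ⊗≫ ((β_ (V ⊗ Y) (Yᘁ)).hom ▷ U)
          ⊗≫ ((Yᘁ) ◁ ((β_ (V ⊗ Y) U).hom ≫ (U ◁ g)))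
          ⊗≫ ((Yᘁ) ◁ ((β_ X U).inv ≫ (β_ U X).inv ≫ f ≫ θ Y))
          ⊗≫ ε_ Y (Yᘁ) := by
        rw [braiding_tensor_right_hom]
        monoidal
    _ = 𝟙 (U ⊗ V) ⊗≫ (β_ U V).hom
          ⊗≫ (V ◁ (η_ Y (Yᘁ) ▷ U))
          ⊗≫ ((β_ (V ⊗ Y) (Yᘁ)).hom ▷ U)
          ⊗≫ ((Yᘁ) ◁ ((g ▷ U) ≫ (β_ X U).hom ≫ (β_ X U).inv ≫ (β_ U X).inv ≫ f ≫ θ Y))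
          ⊗≫ ε_ Y (Yᘁ) := by
        rw [← braiding_naturality_left g U]
        monoidal
    _ = 𝟙 (U ⊗ V) ⊗≫ (β_ U V).hom
          ⊗≫ (V ◁ (η_ Y (Yᘁ) ▷ U))
          ⊗≫ ((β_ (V ⊗ Y) (Yᘁ)).hom ▷ U)
          ⊗≫ ((Yᘁ) ◁ ((g ▷ U) ≫ (β_ U X).inv ≫ f ≫ θ Y))
          ⊗≫ ε_ Y (Yᘁ) := by
        rw [Iso.hom_inv_id_assoc]
    _ = _ := by
        simp only [psiAux]
        monoidal

end PartialTraceCyclic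

/-- Partial traces in a ribbon category are cyclic up to braidings and
twists: for `f : U ⊗ X ⟶ Y` and `g : V ⊗ Y ⟶ X`,
`tr₃(f ∘ (id_U ⊗ g)) = tr₃(g ∘ (id_V ⊗ f) ∘ ((c_{U,V} ∘ (θ_U ⊗ id_V)) ⊗ id_X))`. -/
theorem partialTrace_cyclic (θ : ∀ X : C, X ⟶ X)
    (hθiso : ∀ X, IsIso (θ X))
    (hθnat : ∀ {X Y : C} (g : X ⟶ Y), g ≫ θ Y = θ X ≫ g)
    (hθone : θ (𝟙_ C) = 𝟙 (𝟙_ C))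
    (hθtensor : ∀ X Y : C, θ (X ⊗ Y) = (β_ X Y).hom ≫ (β_ Y X).hom ≫ (θ X ⊗ₘ θ Y))
    (hθdual : ∀ X : C, θ (Xᘁ) = (θ X)ᘁ)
    (U V X Y : C) (f : U ⊗ X ⟶ Y) (g : V ⊗ Y ⟶ X) :
    partialTrace θ ((α_ U V Y).hom ≫ (U ◁ g) ≫ f) =
    partialTrace θ ((((θ U ▷ V) ≫ (β_ U V).hom) ▷ X) ≫ (α_ V U X).hom ≫ (V ◁ f) ≫ g) := by
  rw [PartialTraceCyclic.mainL θ f g, PartialTraceCyclic.mainR θ hθiso hθnat hθtensor f g]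
  exact PartialTraceCyclic.bridge θ f g
end
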